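/- Let X be a Banach space with bounded projections P_1, P_2, P_3 satisfying P_iP_j = 0 for i ≠ j and P_1 + P_2 + P_3 = I, with ranges M_1, M_2, M_3 all nonzero. Let 𝒜 be the algebra of operators S ∈ B(X) such that SM_1 ⊆ M_1, S(M_2) ⊆ M_2, and S(M_2 ⊕ M_3) ⊆ M_2 ⊕ M_3 (block upper-triangular form [[*,0,0],[0,*,*],[0,0,*]]). Then the only closed subspaces of X invariant under every operator in 𝒜, other than 0 and X, are M_1, M_2, M_1 ⊕ M_2, and M_2 ⊕ M_3. -/

import Mathlib

open Filter

/-- if `X = M₁ ⊕ M₂ ⊕ M₃` via projections `P₁, P₂, P₃` and `𝒜` is the algebra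
of block upper-triangular operators `[[*,0,0],[0,*,*],[0,0,*]]`, then the only nontrivial
closed subspaces of `X` invariant under every operator in `𝒜` are `M₁`, `M₂`, `M₁ ⊕ M₂`
and `M₂ ⊕ M₃`. -/
theorem stmt10 (X : Type*) [NormedAddCommGroup X] [NormedSpace ℝ X] [CompleteSpace X]
    (P₁ P₂ P₃ : X →L[ℝ] X)
    (h11 : P₁ ∘L P₁ = P₁) (h22 : P₂ ∘L P₂ = P₂) (h33 : P₃ ∘L P₃ = P₃)
    (h12 : P₁ ∘L P₂ = 0) (h21 : P₂ ∘L P₁ = 0) (h13 : P₁ ∘L P₃ = 0)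
    (h31 : P₃ ∘L P₁ = 0) (h23 : P₂ ∘L P₃ = 0) (h32 : P₃ ∘L P₂ = 0)
    (hsum : P₁ + P₂ + P₃ = 1)
    (M₁ M₂ M₃ : Submodule ℝ X)
    (hM₁ : M₁ = LinearMap.range (P₁ : X →ₗ[ℝ] X))
    (hM₂ : M₂ = LinearMap.range (P₂ : X →ₗ[ℝ] X))
    (hM₃ : M₃ = LinearMap.range (P₃ : X →ₗ[ℝ] X))
    (hne₁ : M₁ ≠ ⊥) (hne₂ : M₂ ≠ ⊥) (hne₃ : M₃ ≠ ⊥)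
    (N : Submodule ℝ X) (hNclosed : IsClosed (N : Set X))
    (hNinv : ∀ S : X →L[ℝ] X,
      (∀ v ∈ M₁, S v ∈ M₁) → (∀ v ∈ M₂, S v ∈ M₂) →
      (∀ v ∈ M₂ ⊔ M₃, S v ∈ M₂ ⊔ M₃) →
      ∀ v ∈ N, S v ∈ N)
    (hNbot : N ≠ ⊥) (hNtop : N ≠ ⊤) :
    N = M₁ ∨ N = M₂ ∨ N = M₁ ⊔ M₂ ∨ N = M₂ ⊔ M₃ := by
  -- pointwise versions of the hypotheses
  have hpt : ∀ x : X, P₁ x + P₂ x + P₃ x = x := fun x => by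
    have := congrArg (fun T : X →L[ℝ] X => T x) hsum; simpa using this
  have h11' : ∀ x, P₁ (P₁ x) = P₁ x := fun x => by
    have := congrArg (fun T : X →L[ℝ] X => T x) h11; simpa using this
  have h22' : ∀ x, P₂ (P₂ x) = P₂ x := fun x => by
    have := congrArg (fun T : X →L[ℝ] X => T x) h22; simpa using this
  have h33' : ∀ x, P₃ (P₃ x) = P₃ x := fun x => by
    have := congrArg (fun T : X →L[ℝ] X => T x) h33; simpa using this
  have h12' : ∀ x, P₁ (P₂ x) = 0 := fun x => by
    have := congrArg (fun T : X →L[ℝ] X => T x) h12; simpa using this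
  have h21' : ∀ x, P₂ (P₁ x) = 0 := fun x => by
    have := congrArg (fun T : X →L[ℝ] X => T x) h21; simpa using this
  have h13' : ∀ x, P₁ (P₃ x) = 0 := fun x => by
    have := congrArg (fun T : X →L[ℝ] X => T x) h13; simpa using this
  have h31' : ∀ x, P₃ (P₁ x) = 0 := fun x => by
    have := congrArg (fun T : X →L[ℝ] X => T x) h31; simpa using this
  have h23' : ∀ x, P₂ (P₃ x) = 0 := fun x => by
    have := congrArg (fun T : X →L[ℝ] X => T x) h23; simpa using this
  have h32' : ∀ x, P₃ (P₂ x) = 0 := fun x => by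
    have := congrArg (fun T : X →L[ℝ] X => T x) h32; simpa using this
  -- membership helpers
  have hmem₁ : ∀ x, P₁ x ∈ M₁ := fun x => by rw [hM₁]; exact ⟨x, rfl⟩
  have hmem₂ : ∀ x, P₂ x ∈ M₂ := fun x => by rw [hM₂]; exact ⟨x, rfl⟩
  have hmem₃ : ∀ x, P₃ x ∈ M₃ := fun x => by rw [hM₃]; exact ⟨x, rfl⟩
  have heq₁ : ∀ x ∈ M₁, P₁ x = x := by
    intro x hx; rw [hM₁] at hx; obtain ⟨w, rfl⟩ := hx; exact h11' w
  have heq₂ : ∀ x ∈ M₂, P₂ x = x := by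
    intro x hx; rw [hM₂] at hx; obtain ⟨w, rfl⟩ := hx; exact h22' w
  have heq₃ : ∀ x ∈ M₃, P₃ x = x := by
    intro x hx; rw [hM₃] at hx; obtain ⟨w, rfl⟩ := hx; exact h33' w
  have hker : ∀ w ∈ M₂ ⊔ M₃, P₁ w = 0 := by
    intro w hw
    obtain ⟨a, ha, b, hb, rfl⟩ := Submodule.mem_sup.mp hw
    rw [map_add, ← heq₂ a ha, ← heq₃ b hb, h12', h13', add_zero]
  have hz₂ : ∀ w ∈ M₂, P₁ w = 0 := fun w hw => by rw [← heq₂ w hw]; exact h12' _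
  have hz₂₃ : ∀ w ∈ M₂, P₃ w = 0 := fun w hw => by rw [← heq₂ w hw]; exact h32' _
  have hz₁₃ : ∀ w ∈ M₁, P₃ w = 0 := fun w hw => by rw [← heq₁ w hw]; exact h31' _
  have hz₁₂ : ∀ w ∈ M₁, P₂ w = 0 := fun w hw => by rw [← heq₁ w hw]; exact h21' _
  -- N is invariant under the three projections
  have hN1 : ∀ v ∈ N, P₁ v ∈ N := by
    refine hNinv P₁ (fun w _ => hmem₁ w) (fun w hw => ?_) (fun w hw => ?_)
    · rw [hz₂ w hw]; exact zero_mem _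
    · rw [hker w hw]; exact zero_mem _
  have hN2 : ∀ v ∈ N, P₂ v ∈ N := by
    refine hNinv P₂ (fun w hw => ?_) (fun w _ => hmem₂ w) (fun w _ => ?_)
    · rw [hz₁₂ w hw]; exact zero_mem _
    · exact Submodule.mem_sup_left (hmem₂ w)
  have hN3 : ∀ v ∈ N, P₃ v ∈ N := by
    refine hNinv P₃ (fun w hw => ?_) (fun w hw => ?_) (fun w _ => ?_)
    · rw [hz₁₃ w hw]; exact zero_mem _
    · rw [hz₂₃ w hw]; exact zero_mem _
    · exact Submodule.mem_sup_right (hmem₃ w)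
  -- compressed rank-one operators lie in the algebra
  have inv11 : ∀ T : X →L[ℝ] X, ∀ v ∈ N, (P₁ ∘L T ∘L P₁) v ∈ N := by
    intro T v hv
    refine hNinv (P₁ ∘L T ∘L P₁) (fun w _ => hmem₁ _) (fun w hw => ?_) (fun w hw => ?_) v hv
    · simp only [ContinuousLinearMap.comp_apply, hz₂ w hw, map_zero]; exact zero_mem _
    · simp only [ContinuousLinearMap.comp_apply, hker w hw, map_zero]; exact zero_mem _
  have inv22 : ∀ T : X →L[ℝ] X, ∀ v ∈ N, (P₂ ∘L T ∘L P₂) v ∈ N := by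
    intro T v hv
    refine hNinv (P₂ ∘L T ∘L P₂) (fun w hw => ?_) (fun w _ => hmem₂ _) (fun w _ => ?_) v hv
    · simp only [ContinuousLinearMap.comp_apply, hz₁₂ w hw, map_zero]; exact zero_mem _
    · exact Submodule.mem_sup_left (hmem₂ _)
  have inv23 : ∀ T : X →L[ℝ] X, ∀ v ∈ N, (P₂ ∘L T ∘L P₃) v ∈ N := by
    intro T v hv
    refine hNinv (P₂ ∘L T ∘L P₃) (fun w hw => ?_) (fun w hw => ?_) (fun w _ => ?_) v hv
    · simp only [ContinuousLinearMap.comp_apply, hz₁₃ w hw, map_zero]; exact zero_mem _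
    · simp only [ContinuousLinearMap.comp_apply, hz₂₃ w hw, map_zero]; exact zero_mem _
    · exact Submodule.mem_sup_left (hmem₂ _)
  have inv33 : ∀ T : X →L[ℝ] X, ∀ v ∈ N, (P₃ ∘L T ∘L P₃) v ∈ N := by
    intro T v hv
    refine hNinv (P₃ ∘L T ∘L P₃) (fun w hw => ?_) (fun w hw => ?_) (fun w _ => ?_) v hv
    · simp only [ContinuousLinearMap.comp_apply, hz₁₃ w hw, map_zero]; exact zero_mem _
    · simp only [ContinuousLinearMap.comp_apply, hz₂₃ w hw, map_zero]; exact zero_mem _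
    · exact Submodule.mem_sup_right (hmem₃ _)
  -- rank-one transfer lemma
  have grab : ∀ (Pa Pb : X →L[ℝ] X),
      (∀ T : X →L[ℝ] X, ∀ v ∈ N, (Pa ∘L T ∘L Pb) v ∈ N) →
      ∀ x ∈ N, Pb x = x → x ≠ 0 → ∀ y, Pa y = y → y ∈ N := by
    intro Pa Pb hS x hxN hbx hx0 y hay
    obtain ⟨g, -, hgx⟩ := exists_dual_vector ℝ x (norm_ne_zero_iff.mpr hx0)
    have h := hS ((‖x‖⁻¹ • g).smulRight y) x hxN
    have hc : (Pa ∘L ((‖x‖⁻¹ • g).smulRight y) ∘L Pb) x = y := by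
      have hgx' : g x = ‖x‖ := by simpa using hgx
      rw [ContinuousLinearMap.comp_apply, ContinuousLinearMap.comp_apply, hbx,
        ContinuousLinearMap.smulRight_apply, ContinuousLinearMap.smul_apply, hgx',
        map_smul, hay, smul_eq_mul,
        inv_mul_cancel₀ (norm_ne_zero_iff.mpr hx0), one_smul]
    rw [hc] at h; exact h
  -- main case analysis
  by_cases h1 : ∀ v ∈ N, P₁ v = 0
  · by_cases h3 : ∀ v ∈ N, P₃ v = 0
    · by_cases h2 : ∀ v ∈ N, P₂ v = 0
      · exfalso
        refine hNbot ((Submodule.eq_bot_iff N).mpr fun w hw => ?_)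
        rw [← hpt w, h1 w hw, h2 w hw, h3 w hw, add_zero, add_zero]
      · -- N = M₂
        push_neg at h2
        obtain ⟨v, hvN, hv2⟩ := h2
        have hM2N : M₂ ≤ N := fun y hy =>
          grab P₂ P₂ inv22 (P₂ v) (hN2 v hvN) (h22' v) hv2 y (heq₂ y hy)
        have hNM2 : N ≤ M₂ := by
          intro w hw
          have := hpt w
          rw [h1 w hw, h3 w hw, zero_add, add_zero] at this
          exact this ▸ hmem₂ w
        exact Or.inr (Or.inl (le_antisymm hNM2 hM2N))
    · push_neg at h3
      obtain ⟨v, hvN, hv3⟩ := h3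
      have hM2N : M₂ ≤ N := fun y hy =>
        grab P₂ P₃ inv23 (P₃ v) (hN3 v hvN) (h33' v) hv3 y (heq₂ y hy)
      have hM3N : M₃ ≤ N := fun y hy =>
        grab P₃ P₃ inv33 (P₃ v) (hN3 v hvN) (h33' v) hv3 y (heq₃ y hy)
      have hNle : N ≤ M₂ ⊔ M₃ := by
        intro w hw
        have := hpt w
        rw [h1 w hw, zero_add] at this
        exact this ▸ add_mem (Submodule.mem_sup_left (hmem₂ w))
          (Submodule.mem_sup_right (hmem₃ w))
      exact Or.inr (Or.inr (Or.inr (le_antisymm hNle (sup_le hM2N hM3N))))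
  · push_neg at h1
    obtain ⟨v, hvN, hv1⟩ := h1
    have hM1N : M₁ ≤ N := fun y hy =>
      grab P₁ P₁ inv11 (P₁ v) (hN1 v hvN) (h11' v) hv1 y (heq₁ y hy)
    by_cases h3 : ∀ v ∈ N, P₃ v = 0
    · by_cases h2 : ∀ v ∈ N, P₂ v = 0
      · -- N = M₁
        have hNM1 : N ≤ M₁ := by
          intro w hw
          have := hpt w
          rw [h2 w hw, h3 w hw, add_zero, add_zero] at this
          exact this ▸ hmem₁ w
        exact Or.inl (le_antisymm hNM1 hM1N)
      · push_neg at h2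
        obtain ⟨u, huN, hu2⟩ := h2
        have hM2N : M₂ ≤ N := fun y hy =>
          grab P₂ P₂ inv22 (P₂ u) (hN2 u huN) (h22' u) hu2 y (heq₂ y hy)
        have hNle : N ≤ M₁ ⊔ M₂ := by
          intro w hw
          have := hpt w
          rw [h3 w hw, add_zero] at this
          exact this ▸ add_mem (Submodule.mem_sup_left (hmem₁ w))
            (Submodule.mem_sup_right (hmem₂ w))
        exact Or.inr (Or.inr (Or.inl (le_antisymm hNle (sup_le hM1N hM2N))))
    · exfalso
      push_neg at h3
      obtain ⟨u, huN, hu3⟩ := h3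
      have hM2N : M₂ ≤ N := fun y hy =>
        grab P₂ P₃ inv23 (P₃ u) (hN3 u huN) (h33' u) hu3 y (heq₂ y hy)
      have hM3N : M₃ ≤ N := fun y hy =>
        grab P₃ P₃ inv33 (P₃ u) (hN3 u huN) (h33' u) hu3 y (heq₃ y hy)
      refine hNtop (Submodule.eq_top_iff'.mpr fun w => ?_)
      rw [← hpt w]
      exact add_mem (add_mem (hM1N (hmem₁ w)) (hM2N (hmem₂ w))) (hM3N (hmem₃ w))
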